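/- Let n ≥ 1, D ≥ 1 be integers, let Ω ⊆ ℂⁿ be a nonempty open subset, and let (f_m)_{m∈ℕ} be a sequence of maps ℂⁿ → ℂⁿ, each holomorphic on Ω, converging locally uniformly on Ω to the identity map. Suppose there is a nonempty open subset Ω′ ⊆ Ω whose closure is compact and contained in Ω such that for every m, every point x in the closure of Ω′ and every i with 1 ≤ i ≤ D, the i-th iterate f_m^{[i]}(x) lies in Ω, and such that f_m^{[D]}(x) = x for every x ∈ Ω′ and every m. Suppose moreover that for each m a nonempty compact convex subset B_m ⊆ Ω′ is given with f_m(B_m) = B_m. Then there exists m₀ ∈ ℕ such that for every m ≥ m₀ there is a point P_m ∈ B_m with f_m(P_m) = P_m and such that the (complex Fréchet) derivative of f_m at P_m is the identity linear map of ℂⁿ. -/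

import Mathlib

open Filter Topology Metric Set Finset

lemma aux_deriv_bound {E : Type*} [NormedAddCommGroup E] [NormedSpace ℂ E]
    {f : E → E} {Ω : Set E} (hΩ : IsOpen Ω) (hf : DifferentiableOn ℂ f Ω)
    {y : E} {r ε : ℝ} (hr : 0 < r) (hε : 0 < ε)
    (hball : Metric.closedBall y r ⊆ Ω)
    (hsmall : ∀ z ∈ Metric.closedBall y r, ‖f z - z‖ ≤ ε) :
    ‖fderiv ℂ f y - ContinuousLinearMap.id ℂ E‖ ≤ 3 * ε / r := by
  have h3 : 0 ≤ 3 * ε / r := by positivity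
  refine ContinuousLinearMap.opNorm_le_bound _ h3 fun v => ?_
  rcases eq_or_ne v 0 with rfl | hv
  · simp
  have hvn : (0:ℝ) < ‖v‖ := norm_pos_iff.mpr hv
  set R₁ : ℝ := r / ‖v‖ with hR₁def
  have hR₁ : 0 < R₁ := by positivity
  set φ : ℂ → E := fun z => f (y + z • v) - (y + z • v) with hφdef
  have hmem : ∀ z ∈ ball (0:ℂ) R₁, y + z • v ∈ Metric.closedBall y r := by
    intro z hz
    simp only [mem_ball, dist_zero_right] at hz
    simp only [Metric.mem_closedBall, dist_eq_norm, add_sub_cancel_left]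
    rw [norm_smul]
    calc ‖z‖ * ‖v‖ ≤ R₁ * ‖v‖ := by gcongr
      _ = r := div_mul_cancel₀ r hvn.ne'
  have hdiff : ∀ z ∈ ball (0:ℂ) R₁, DifferentiableAt ℂ φ z := by
    intro z hz
    have h1 : DifferentiableAt ℂ (fun z : ℂ => y + z • v) z :=
      (differentiableAt_const y).add (differentiableAt_id.smul_const v)
    exact ((hf.differentiableAt (hΩ.mem_nhds (hball (hmem z hz)))).comp z h1).sub h1
  have hmaps : MapsTo φ (ball (0:ℂ) R₁) (ball (φ 0) (3 * ε)) := by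
    intro z hz
    have h1 : ‖φ z‖ ≤ ε := hsmall _ (hmem z hz)
    have hφ0 : φ 0 = f y - y := by simp [hφdef]
    have h2 : ‖φ 0‖ ≤ ε := by
      rw [hφ0]
      simpa using hsmall y (Metric.mem_closedBall_self hr.le)
    have : ‖φ z - φ 0‖ ≤ 2 * ε := by
      calc ‖φ z - φ 0‖ ≤ ‖φ z‖ + ‖φ 0‖ := norm_sub_le _ _
        _ ≤ 2 * ε := by linarith
    simp only [mem_ball, dist_eq_norm]
    linarith
  have hd := Complex.norm_deriv_le_div_of_mapsTo_ball
    (fun z hz => (hdiff z hz).differentiableWithinAt) (hmaps.mono_right ball_subset_closedBall) hR₁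
  have hder : HasDerivAt φ (fderiv ℂ f y v - v) 0 := by
    have h1 : HasDerivAt (fun z : ℂ => y + z • v) v 0 := by
      simpa using ((hasDerivAt_id (0:ℂ)).smul_const v).const_add y
    have h2 : HasFDerivAt f (fderiv ℂ f y) (y + (0:ℂ) • v) := by
      rw [show y + (0:ℂ) • v = y by simp]
      exact (hf.differentiableAt (hΩ.mem_nhds (hball (Metric.mem_closedBall_self hr.le)))).hasFDerivAt
    exact (h2.comp_hasDerivAt 0 h1).sub h1
  rw [hder.deriv] at hd
  have : ‖fderiv ℂ f y v - v‖ ≤ 3 * ε / R₁ := hd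
  rw [hR₁def] at this
  calc ‖(fderiv ℂ f y - ContinuousLinearMap.id ℂ E) v‖ = ‖fderiv ℂ f y v - v‖ := rfl
    _ ≤ 3 * ε / (r / ‖v‖) := this
    _ = 3 * ε / r * ‖v‖ := by field_simp


lemma aux_pow_eq_one {E : Type*} [NormedAddCommGroup E] [NormedSpace ℂ E]
    {A : E →L[ℂ] E} {D : ℕ} (hD : 1 ≤ D) (hAD : A ^ D = 1)
    (h1 : ‖A - 1‖ ≤ 1) (h2 : ‖A - 1‖ ≤ (D : ℝ) / (2 ^ D + 1)) : A = 1 := by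
  obtain ⟨e, rfl⟩ : ∃ e, D = e + 1 := ⟨D - 1, (Nat.succ_pred_eq_of_pos hD).symm⟩
  set N : E →L[ℂ] E := A - 1 with hN
  have hA : A = N + 1 := by rw [hN]; abel
  have key : (1 : E →L[ℂ] E) = ∑ k ∈ range (e + 2), N ^ k * ((e+1).choose k : E →L[ℂ] E) := by
    rw [← hAD, hA, Commute.add_pow (Commute.one_right N)]
    simp [one_pow, mul_one]
  rw [Finset.sum_range_succ'] at key
  simp only [pow_zero, Nat.choose_zero_right, Nat.cast_one, mul_one, one_mul] at key
  have key2 : ∑ k ∈ range (e + 1), N ^ (k+1) * ((e+1).choose (k+1) : E →L[ℂ] E) = 0 := by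
    have := key
    nth_rewrite 1 [show (1 : E →L[ℂ] E) = 0 + 1 from (zero_add 1).symm] at this
    exact (add_right_cancel this.symm)
  rw [Finset.sum_range_succ'] at key2
  simp only [zero_add, pow_one, Nat.choose_one_right] at key2
  have key3 : N * ((e+1 : ℕ) : E →L[ℂ] E) =
      - ∑ k ∈ range e, N ^ (k+1+1) * ((e+1).choose (k+1+1) : E →L[ℂ] E) := by
    rw [eq_neg_iff_add_eq_zero, add_comm]
    exact key2
  -- norms
  have hnormL : ((e+1 : ℕ) : ℝ) * ‖N‖ = ‖N * ((e+1 : ℕ) : E →L[ℂ] E)‖ := by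
    rw [← nsmul_eq_mul' N (e+1), RCLike.norm_nsmul ℝ]
    simp [nsmul_eq_mul]
  have hbound : ∀ k ∈ range e, ‖N ^ (k+1+1) * ((e+1).choose (k+1+1) : E →L[ℂ] E)‖
      ≤ ‖N‖ ^ 2 * ((e+1).choose (k+1+1) : ℝ) := by
    intro k _
    have hpk : ‖N ^ (k+1+1)‖ ≤ ‖N‖ ^ (k+1+1) := norm_pow_le' N (Nat.succ_pos _)
    have hpk2 : ‖N‖ ^ (k+1+1) ≤ ‖N‖ ^ 2 :=
      pow_le_pow_of_le_one (norm_nonneg _) h1 (by omega)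
    have hc : ‖(((e+1).choose (k+1+1) : ℕ) : E →L[ℂ] E)‖ ≤ ((e+1).choose (k+1+1) : ℝ) := by
      calc ‖(((e+1).choose (k+1+1) : ℕ) : E →L[ℂ] E)‖
          = ‖((e+1).choose (k+1+1)) • (1 : E →L[ℂ] E)‖ := by rw [nsmul_eq_mul, mul_one]
        _ ≤ ((e+1).choose (k+1+1) : ℝ) * ‖(1 : E →L[ℂ] E)‖ := norm_nsmul_le
        _ ≤ ((e+1).choose (k+1+1) : ℝ) * 1 :=
            mul_le_mul_of_nonneg_left ContinuousLinearMap.norm_id_le (by positivity)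
        _ = _ := mul_one _
    calc ‖N ^ (k+1+1) * ((e+1).choose (k+1+1) : E →L[ℂ] E)‖
        ≤ ‖N ^ (k+1+1)‖ * ‖(((e+1).choose (k+1+1) : ℕ) : E →L[ℂ] E)‖ := norm_mul_le _ _
      _ ≤ ‖N‖ ^ 2 * ((e+1).choose (k+1+1) : ℝ) :=
          mul_le_mul (hpk.trans hpk2) hc (norm_nonneg _) (by positivity)
  have hsumchoose : (∑ k ∈ range e, ((e+1).choose (k+1+1) : ℝ)) ≤ 2 ^ (e+1) := by
    have hnat : (∑ k ∈ range e, (e+1).choose (k+1+1)) ≤ 2 ^ (e+1) := by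
      have htot := Nat.sum_range_choose (e+1)
      rw [Finset.sum_range_succ'] at htot
      rw [Finset.sum_range_succ'] at htot
      omega
    calc (∑ k ∈ range e, ((e+1).choose (k+1+1) : ℝ))
        = ((∑ k ∈ range e, (e+1).choose (k+1+1) : ℕ) : ℝ) := by push_cast; ring
      _ ≤ ((2^(e+1) : ℕ) : ℝ) := by exact_mod_cast hnat
      _ = 2 ^ (e+1) := by push_cast; ring
  have hmain : ((e+1 : ℕ) : ℝ) * ‖N‖ ≤ ‖N‖ ^ 2 * 2 ^ (e+1) := by
    rw [hnormL, key3, norm_neg]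
    calc ‖∑ k ∈ range e, N ^ (k+1+1) * ((e+1).choose (k+1+1) : E →L[ℂ] E)‖
        ≤ ∑ k ∈ range e, ‖N ^ (k+1+1) * ((e+1).choose (k+1+1) : E →L[ℂ] E)‖ :=
          norm_sum_le _ _
      _ ≤ ∑ k ∈ range e, ‖N‖ ^ 2 * ((e+1).choose (k+1+1) : ℝ) :=
          Finset.sum_le_sum hbound
      _ = ‖N‖ ^ 2 * ∑ k ∈ range e, ((e+1).choose (k+1+1) : ℝ) := by
          rw [Finset.mul_sum]
      _ ≤ ‖N‖ ^ 2 * 2 ^ (e+1) := by gcongr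
  have hNzero : ‖N‖ = 0 := by
    by_contra h
    have hpos : 0 < ‖N‖ := lt_of_le_of_ne (norm_nonneg _) (Ne.symm h)
    have h2' : ‖N‖ ≤ ((e+1 : ℕ) : ℝ) / (2 ^ (e+1) + 1) := by exact_mod_cast h2
    have hp : (0:ℝ) < 2 ^ (e+1) + 1 := by positivity
    have hP : (0:ℝ) < 2 ^ (e+1) := by positivity
    have hle : ‖N‖ * (2 ^ (e+1) + 1) ≤ ((e+1 : ℕ) : ℝ) := (le_div_iff₀ hp).mp h2'
    have hc1 : (1:ℝ) ≤ ((e+1 : ℕ) : ℝ) := by exact_mod_cast hD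
    have key4 := mul_le_mul_of_nonneg_left hle (mul_nonneg (norm_nonneg N) hP.le)
    nlinarith [key4, hmain, hpos, hP, hc1]
  have : N = 0 := norm_eq_zero.mp hNzero
  rw [hA, this, zero_add]


lemma aux_fixed {E : Type*} [NormedAddCommGroup E] [NormedSpace ℝ E]
    {f : E → E} {B : Set E} {c : ℝ} {D : ℕ} (hD : 1 ≤ D)
    (hc : 0 ≤ c) (hcD : c * (4 * D) ≤ 1)
    (hLip : ∀ x ∈ B, ∀ y ∈ B, ‖(f x - x) - (f y - y)‖ ≤ c * ‖x - y‖)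
    (hinv : f '' B = B) (hordB : ∀ x ∈ B, f^[D] x = x)
    {x : E} (hx : x ∈ B) : f x = x := by
  have hXB : ∀ i, f^[i] x ∈ B := by
    intro i
    induction i with
    | zero => simpa using hx
    | succ i ih =>
      rw [Function.iterate_succ_apply', ← hinv]
      exact ⟨_, ih, rfl⟩
  set d := ‖f x - x‖ with hd
  have hd0 : 0 ≤ d := norm_nonneg _
  set v : ℕ → E := fun i => f^[i+1] x - f^[i] x with hv
  have hv0 : v 0 = f x - x := by simp [hv]
  have hvstep : ∀ i, ‖v (i+1) - v i‖ ≤ c * ‖v i‖ := by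
    intro i
    have h3 : v (i+1) - v i =
        f (f^[i+1] x) - f^[i+1] x - (f (f^[i] x) - f^[i] x) := by
      simp only [hv, Function.iterate_succ_apply' f (i+1), Function.iterate_succ_apply' f i]
    have h4 : ‖v i‖ = ‖f^[i+1] x - f^[i] x‖ := rfl
    rw [h3, h4]
    exact hLip _ (hXB (i+1)) _ (hXB i)
  have hcD' : 2 * c * (D:ℝ) ≤ 1/2 := by
    have : (0:ℝ) ≤ (D:ℝ) := Nat.cast_nonneg _
    nlinarith
  have hv0n : ‖v 0‖ = d := by rw [hv0]
  have hkey : ∀ i, i ≤ D → ‖v i - v 0‖ ≤ 2 * c * i * d := by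
    intro i
    induction i with
    | zero => intro _; simp
    | succ i ih =>
      intro hiD
      have hiD' : i ≤ D := by omega
      have hIH := ih hiD'
      have hcast : (i:ℝ) ≤ (D:ℝ) := by exact_mod_cast hiD'
      have hci : 2 * c * (i:ℝ) ≤ 1 := by nlinarith
      have hvi' : ‖v i‖ ≤ ‖v 0‖ + ‖v i - v 0‖ := by
        calc ‖v i‖ = ‖v 0 + (v i - v 0)‖ := by rw [add_sub_cancel]
          _ ≤ ‖v 0‖ + ‖v i - v 0‖ := norm_add_le _ _
      have hvi : ‖v i‖ ≤ 2 * d := by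
        nlinarith [mul_nonneg (show (0:ℝ) ≤ 1 - 2*c*(i:ℝ) by linarith) hd0]
      calc ‖v (i+1) - v 0‖ ≤ ‖v (i+1) - v i‖ + ‖v i - v 0‖ := by
            have := dist_triangle (v (i+1)) (v i) (v 0)
            simpa [dist_eq_norm] using this
        _ ≤ c * ‖v i‖ + 2 * c * i * d := add_le_add (hvstep i) hIH
        _ ≤ 2 * c * ((i:ℕ)+1 : ℕ) * d := by
            push_cast
            nlinarith [mul_le_mul_of_nonneg_left hvi hc]
  have hsum : ∑ i ∈ range D, v i = 0 := by
    have := Finset.sum_range_sub (fun i => f^[i] x) D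
    simp only [hv]
    rw [this]
    simp [hordB x hx]
  have hDv0 : (D : ℝ) * d ≤ (D : ℝ) * (1/2 * d) := by
    have heq : (D • v 0 : E) = ∑ i ∈ range D, (v 0 - v i) := by
      rw [Finset.sum_sub_distrib, hsum, sub_zero, Finset.sum_const, Finset.card_range]
    have hnorm : ‖(D • v 0 : E)‖ = (D:ℝ) * d := by
      rw [RCLike.norm_nsmul ℝ, hv0, ← hd]
      simp [nsmul_eq_mul]
    calc (D:ℝ) * d = ‖(D • v 0 : E)‖ := hnorm.symm
      _ = ‖∑ i ∈ range D, (v 0 - v i)‖ := by rw [heq]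
      _ ≤ ∑ i ∈ range D, ‖v 0 - v i‖ := norm_sum_le _ _
      _ ≤ ∑ i ∈ range D, (1/2 * d) := by
          apply Finset.sum_le_sum
          intro i hi
          rw [norm_sub_rev]
          have hiD : i ≤ D := (Finset.mem_range.mp hi).le
          have h1 := hkey i hiD
          have hcast : (i:ℝ) ≤ (D:ℝ) := by exact_mod_cast hiD
          have step1 : 2*c*(i:ℝ)*d ≤ 2*c*(D:ℝ)*d := by
            nlinarith [mul_nonneg (sub_nonneg.mpr hcast) (mul_nonneg hc hd0)]
          have step2 : 2*c*(D:ℝ)*d ≤ 1/2*d := by nlinarith [hcD', hd0]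
          linarith
      _ = (D:ℝ) * (1/2 * d) := by rw [Finset.sum_const, Finset.card_range]; simp [nsmul_eq_mul]
  have hDpos : (0:ℝ) < D := by exact_mod_cast hD
  have hdzero : d = 0 := by nlinarith [hDv0, hDpos, hd0]
  have : f x - x = 0 := by rwa [← norm_eq_zero, ← hd]
  exact sub_eq_zero.mp this


lemma aux_c_pos {D : ℕ} (hD : 1 ≤ D) :
    0 < min (1/(4*(D:ℝ))) ((D:ℝ)/(2^D+1)) := by
  have hD0 : (0:ℝ) < (D:ℝ) := by exact_mod_cast hD
  apply lt_min
  · positivity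
  · positivity


/-- **Lemma (fixed points with identity differential).**
Under the assumptions of the bounded-order proposition, given for each `m` a nonempty compact
convex `B_m ⊆ Ω'` with `f m '' B_m = B_m`, for all large `m` there is a fixed point
`P_m ∈ B_m` of `f m` at which the complex Fréchet derivative of `f m` is the identity. -/
theorem stmt2 (n D : ℕ) (hn : 1 ≤ n) (hD : 1 ≤ D)
    (Ω : Set (EuclideanSpace ℂ (Fin n))) (hΩne : Ω.Nonempty) (hΩopen : IsOpen Ω)
    (f : ℕ → EuclideanSpace ℂ (Fin n) → EuclideanSpace ℂ (Fin n))
    (hf : ∀ m, DifferentiableOn ℂ (f m) Ω)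
    (hconv : TendstoLocallyUniformlyOn (fun m => f m) id atTop Ω)
    (Ω' : Set (EuclideanSpace ℂ (Fin n))) (hΩ'ne : Ω'.Nonempty) (hΩ'open : IsOpen Ω')
    (hΩ'sub : Ω' ⊆ Ω) (hΩ'cpt : IsCompact (closure Ω')) (hclsub : closure Ω' ⊆ Ω)
    (hiter : ∀ m, ∀ x ∈ closure Ω', ∀ i, 1 ≤ i → i ≤ D → (f m)^[i] x ∈ Ω)
    (hord : ∀ m, ∀ x ∈ Ω', (f m)^[D] x = x)
    (B : ℕ → Set (EuclideanSpace ℂ (Fin n)))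
    (hBne : ∀ m, (B m).Nonempty) (hBcpt : ∀ m, IsCompact (B m))
    (hBconv : ∀ m, Convex ℝ (B m)) (hBsub : ∀ m, B m ⊆ Ω')
    (hBinv : ∀ m, f m '' B m = B m) :
    ∃ m₀ : ℕ, ∀ m ≥ m₀, ∃ P ∈ B m, f m P = P ∧
      fderiv ℂ (f m) P = ContinuousLinearMap.id ℂ (EuclideanSpace ℂ (Fin n)) := by
  classical
  have hD0 : (0:ℝ) < (D:ℝ) := by exact_mod_cast hD
  obtain ⟨r, hr, hrsub⟩ := hΩ'cpt.exists_cthickening_subset_open hΩopen hclsub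
  set K' := Metric.cthickening r (closure Ω') with hK'def
  have hK'cpt : IsCompact K' := hΩ'cpt.cthickening
  have hunif : TendstoUniformlyOn (fun m => f m) id atTop K' :=
    (tendstoLocallyUniformlyOn_iff_forall_isCompact hΩopen).mp hconv K' hrsub hK'cpt
  set c : ℝ := min (1/(4*(D:ℝ))) ((D:ℝ)/(2^D+1)) with hcdef
  have hc0 : 0 < c := aux_c_pos hD
  set ε : ℝ := c * r / 3 with hεdef
  have hε : 0 < ε := by positivity
  have hev := (Metric.tendstoUniformlyOn_iff.mp hunif) ε hε
  rw [Filter.eventually_atTop] at hev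
  obtain ⟨m₀, hm₀⟩ := hev
  refine ⟨m₀, fun m hm => ?_⟩
  have hsmall : ∀ z ∈ K', ‖f m z - z‖ ≤ ε := by
    intro z hz
    have h := hm₀ m hm z hz
    rw [show dist (id z) (f m z) = ‖f m z - z‖ by
      rw [dist_eq_norm, norm_sub_rev]; rfl] at h
    exact h.le
  have hder : ∀ y ∈ closure Ω',
      ‖fderiv ℂ (f m) y - ContinuousLinearMap.id ℂ (EuclideanSpace ℂ (Fin n))‖ ≤ c := by
    intro y hy
    have hball : Metric.closedBall y r ⊆ K' := Metric.closedBall_subset_cthickening hy r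
    have hbnd := aux_deriv_bound hΩopen (hf m) hr hε (hball.trans hrsub)
      (fun z hz => hsmall z (hball hz))
    have heq : 3 * ε / r = c := by rw [hεdef]; field_simp
    rwa [heq] at hbnd
  have hBK : B m ⊆ closure Ω' := (hBsub m).trans subset_closure
  have hLip : ∀ x ∈ B m, ∀ y ∈ B m, ‖(f m x - x) - (f m y - y)‖ ≤ c * ‖x - y‖ := by
    intro x hx y hy
    have h := (hBconv m).norm_image_sub_le_of_norm_hasFDerivWithin_le
      (f := fun z => f m z - z)
      (f' := fun z => ((fderiv ℂ (f m) z).restrictScalars ℝ)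
        - ContinuousLinearMap.id ℝ (EuclideanSpace ℂ (Fin n)))
      (fun z hz => ((((hf m).differentiableAt
          (hΩopen.mem_nhds (hΩ'sub (hBsub m hz)))).hasFDerivAt.restrictScalars ℝ).sub
          (hasFDerivAt_id z)).hasFDerivWithinAt)
      (C := c)
      (fun z hz => by
        have h1 : ((fderiv ℂ (f m) z).restrictScalars ℝ)
            - ContinuousLinearMap.id ℝ (EuclideanSpace ℂ (Fin n))
            = (fderiv ℂ (f m) z
              - ContinuousLinearMap.id ℂ (EuclideanSpace ℂ (Fin n))).restrictScalars ℝ := by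
          ext v; rfl
        rw [h1, ContinuousLinearMap.norm_restrictScalars]
        exact hder z (hBK hz))
      hy hx
    exact h
  have hfix : ∀ x ∈ B m, f m x = x := by
    intro x hx
    have hcD : c * (4 * (D:ℝ)) ≤ 1 := by
      have h1 : c ≤ 1/(4*(D:ℝ)) := min_le_left _ _
      have h4D : (0:ℝ) < 4*(D:ℝ) := by positivity
      calc c * (4*(D:ℝ)) ≤ 1/(4*(D:ℝ)) * (4*(D:ℝ)) := by
            exact mul_le_mul_of_nonneg_right h1 h4D.le
        _ = 1 := by field_simp
    exact aux_fixed hD hc0.le hcD hLip (hBinv m)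
      (fun z hz => hord m z (hBsub m hz)) hx
  obtain ⟨P, hP⟩ := hBne m
  have hfP : f m P = P := hfix P hP
  refine ⟨P, hP, hfP, ?_⟩
  set A := fderiv ℂ (f m) P with hAdef
  have hPΩ' : P ∈ Ω' := hBsub m hP
  have hiterA : ∀ i, HasFDerivAt ((f m)^[i]) (A^i) P := by
    intro i
    induction i with
    | zero =>
      simp only [Function.iterate_zero, pow_zero]
      exact hasFDerivAt_id P
    | succ i ih =>
      have hfd : HasFDerivAt (f m) A ((f m)^[i] P) := by
        rw [Function.iterate_fixed hfP i]
        exact ((hf m).differentiableAt (hΩopen.mem_nhds (hΩ'sub hPΩ'))).hasFDerivAt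
      have hcomp := hfd.comp P ih
      rw [Function.iterate_succ' (f m) i, pow_succ']
      exact hcomp
  have hDid : fderiv ℂ ((f m)^[D]) P
      = ContinuousLinearMap.id ℂ (EuclideanSpace ℂ (Fin n)) := by
    have hev : (f m)^[D] =ᶠ[nhds P] id := by
      filter_upwards [hΩ'open.mem_nhds hPΩ'] with z hz using hord m z hz
    rw [hev.fderiv_eq, fderiv_id]
  have hAD : A ^ D = 1 := by
    have h1 := (hiterA D).fderiv
    rw [hDid] at h1
    rw [← h1, ContinuousLinearMap.one_def]
  have hAc : ‖A - 1‖ ≤ c := by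
    rw [ContinuousLinearMap.one_def]
    exact hder P (hBK hP)
  have hc1 : c ≤ 1 := by
    have h1 : c ≤ 1/(4*(D:ℝ)) := min_le_left _ _
    have : 1/(4*(D:ℝ)) ≤ 1 := by
      rw [div_le_one (by positivity)]
      have h2 : (1:ℝ) ≤ (D:ℝ) := by exact_mod_cast hD
      linarith
    linarith
  have hc2 : c ≤ (D:ℝ) / (2^D + 1) := min_le_right _ _
  have hres : A = 1 := aux_pow_eq_one hD hAD (hAc.trans hc1) (hAc.trans hc2)
  rw [← ContinuousLinearMap.one_def]
  exact hres
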